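/- Let Ω = (L₁, L₂) and H₃ = { u ∈ H³(Ω) : u(Lᵢ) = u''(Lᵢ) = 0 }. If c ∈ W^{3,∞}(Ω) is such that cu ∈ H₃ for every u ∈ H₃, then c'(L₁) = c'(L₂) = 0. (Necessity of the one-dimensional compatibility condition.) -/

import Mathlib

lemma deriv_contDiff_two {f : ℝ → ℝ} (hf : ContDiff ℝ 3 f) : ContDiff ℝ 2 (deriv f) := by
  have h3 : ContDiff ℝ (2 + 1 : ℕ) f := by exact_mod_cast hf
  exact (contDiff_succ_iff_deriv.mp (by exact_mod_cast h3)).2.2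

lemma key_prod (c u : ℝ → ℝ) (hc : ContDiff ℝ 3 c) (hu : ContDiff ℝ 3 u)
    (x₀ : ℝ) (h0 : u x₀ = 0) (h2 : deriv (deriv u) x₀ = 0) :
    deriv (deriv fun x => c x * u x) x₀ = 2 * deriv c x₀ * deriv u x₀ := by
  have hc1 : Differentiable ℝ c := hc.differentiable (by norm_num)
  have hu1 : Differentiable ℝ u := hu.differentiable (by norm_num)
  have hc'1 : Differentiable ℝ (deriv c) := (deriv_contDiff_two hc).differentiable (by norm_num)
  have hu'1 : Differentiable ℝ (deriv u) := (deriv_contDiff_two hu).differentiable (by norm_num)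
  have e1 : (deriv fun x => c x * u x) = fun x => deriv c x * u x + c x * deriv u x := by
    funext x
    exact deriv_mul (hc1 x) (hu1 x)
  rw [e1, deriv_fun_add (f := fun x => deriv c x * u x) (g := fun x => c x * deriv u x) ((hc'1 x₀).mul (hu1 x₀)) ((hc1 x₀).mul (hu'1 x₀)),
    deriv_fun_mul (hc'1 x₀) (hu1 x₀), deriv_fun_mul (hc1 x₀) (hu'1 x₀), h0, h2]
  ring



/-- one-dimensional compatibility condition, necessity:
if multiplication by `c` (of class `C³`, modelling `W^{3,∞}`) preserves
`H₃ = {u : u = u'' = 0 at L₁, L₂}`, then `c'(L₁) = c'(L₂) = 0`. -/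
theorem stmt_9 (L₁ L₂ : ℝ) (hL : L₁ < L₂) (c : ℝ → ℝ) (hc : ContDiff ℝ 3 c)
    (h : ∀ u : ℝ → ℝ, ContDiff ℝ 3 u → u L₁ = 0 → u L₂ = 0 →
      deriv (deriv u) L₁ = 0 → deriv (deriv u) L₂ = 0 →
      (ContDiff ℝ 3 (fun x => c x * u x) ∧
        c L₁ * u L₁ = 0 ∧ c L₂ * u L₂ = 0 ∧
        deriv (deriv fun x => c x * u x) L₁ = 0 ∧
        deriv (deriv fun x => c x * u x) L₂ = 0)) :
    deriv c L₁ = 0 ∧ deriv c L₂ = 0 := by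
  have hd : L₂ - L₁ > 0 := sub_pos.mpr hL
  set k : ℝ := Real.pi / (L₂ - L₁) with hk
  have hkpos : 0 < k := div_pos Real.pi_pos hd
  set u : ℝ → ℝ := fun x => Real.sin (k * (x - L₁)) with hu
  have hinner : ∀ x : ℝ, HasDerivAt (fun y => k * (y - L₁)) k x := by
    intro x
    simpa using ((hasDerivAt_id x).sub_const L₁).const_mul k
  have hU : ContDiff ℝ 3 u :=
    (Real.contDiff_sin.of_le le_top).comp (contDiff_const.mul (contDiff_id.sub contDiff_const))
  have hu' : ∀ x, HasDerivAt u (Real.cos (k * (x - L₁)) * k) x := fun x =>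
    (Real.hasDerivAt_sin _).comp x (hinner x)
  have hud : deriv u = fun x => Real.cos (k * (x - L₁)) * k := by
    funext x; exact (hu' x).deriv
  have hu'' : ∀ x, deriv (deriv u) x = -Real.sin (k * (x - L₁)) * k * k := by
    intro x
    rw [hud]
    exact (((Real.hasDerivAt_cos _).comp x (hinner x)).mul_const k).deriv
  have hkL : k * (L₂ - L₁) = Real.pi := div_mul_cancel₀ _ (ne_of_gt hd)
  have h01 : u L₁ = 0 := by simp [hu]
  have h02 : u L₂ = 0 := by simp [hu, hkL]
  have h21 : deriv (deriv u) L₁ = 0 := by rw [hu'']; simp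
  have h22 : deriv (deriv u) L₂ = 0 := by rw [hu'']; simp [hkL]
  obtain ⟨_, _, _, hA, hB⟩ := h u hU h01 h02 h21 h22
  rw [key_prod c u hc hU L₁ h01 h21] at hA
  rw [key_prod c u hc hU L₂ h02 h22] at hB
  rw [(hu' L₁).deriv] at hA
  rw [(hu' L₂).deriv] at hB
  simp only [sub_self, mul_zero, Real.cos_zero, one_mul, hkL, Real.cos_pi] at hA hB
  constructor
  · have := mul_eq_zero.mp hA
    rcases this with h' | h'
    · exact (mul_eq_zero.mp h').resolve_left (by norm_num)
    · exact absurd h' (ne_of_gt hkpos)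
  · have : 2 * deriv c L₂ * k = 0 := by linarith [hB]
    rcases mul_eq_zero.mp this with h' | h'
    · exact (mul_eq_zero.mp h').resolve_left (by norm_num)
    · exact absurd h' (ne_of_gt hkpos)
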